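/- Let V be a ℤ-module with a symmetric bilinear form such that cᵢ·cⱼ ≥ 0 for all distinct indices i ≠ j, where c₁, …, cₙ ∈ V. Let a, b : Fin n → ℕ with Σ aᵢcᵢ = Σ bᵢcᵢ =: e. Define d = Σᵢ max(aᵢ - bᵢ, 0)·cᵢ (and note d also equals Σᵢ max(bᵢ - aᵢ, 0)·cᵢ). Then (e - d)·d ≥ 0; in particular e·d ≥ d·d. -/
import Mathlib


/-- positivity of intersections `cᵢ·cⱼ ≥ 0` for `i ≠ j`, with
`e = ∑ aᵢcᵢ = ∑ bᵢcᵢ` and `d = ∑ max(aᵢ-bᵢ,0)cᵢ`, gives `d = ∑ max(bᵢ-aᵢ,0)cᵢ`,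
`(e-d)·d ≥ 0` and `e·d ≥ d·d`. -/
theorem stmt_2 {V : Type*} [AddCommGroup V] [Module ℤ V]
    (B : V →ₗ[ℤ] V →ₗ[ℤ] ℤ) (hsymm : ∀ x y, B x y = B y x)
    {n : ℕ} (c : Fin n → V)
    (hpos : ∀ i j, i ≠ j → 0 ≤ B (c i) (c j))
    (a b : Fin n → ℕ) (e d : V)
    (he : e = ∑ i, (a i : ℤ) • c i)
    (he' : e = ∑ i, (b i : ℤ) • c i)
    (hd : d = ∑ i, (max ((a i : ℤ) - (b i : ℤ)) 0) • c i) :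
    d = ∑ i, (max ((b i : ℤ) - (a i : ℤ)) 0) • c i ∧
      0 ≤ B (e - d) d ∧ B d d ≤ B e d := by
  have hd' : d = ∑ i, (max ((b i : ℤ) - (a i : ℤ)) 0) • c i := by
    have h0 : d = (∑ i, (max ((b i : ℤ) - (a i : ℤ)) 0) • c i)
        + ((∑ i, (a i : ℤ) • c i) - ∑ i, (b i : ℤ) • c i) := by
      rw [hd, ← Finset.sum_sub_distrib, ← Finset.sum_add_distrib]
      refine Finset.sum_congr rfl fun i _ => ?_
      have hc : max ((a i : ℤ) - (b i : ℤ)) 0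
          = max ((b i : ℤ) - (a i : ℤ)) 0 + ((a i : ℤ) - (b i : ℤ)) := by omega
      rw [hc, add_zsmul, sub_zsmul]
      abel
    rw [h0, ← he, ← he']
    abel
  have key : ∀ i, 0 ≤ B (c i) d := by
    intro i
    rcases le_total ((a i : ℤ)) (b i) with h | h
    · rw [hd, map_sum]
      refine Finset.sum_nonneg fun j _ => ?_
      rw [map_zsmul, zsmul_eq_mul]
      rcases eq_or_ne j i with rfl | hji
      · simp [max_eq_right (sub_nonpos.2 h)]
      · exact mul_nonneg (le_max_right _ _) (hpos i j (Ne.symm hji))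
    · rw [hd', map_sum]
      refine Finset.sum_nonneg fun j _ => ?_
      rw [map_zsmul, zsmul_eq_mul]
      rcases eq_or_ne j i with rfl | hji
      · simp [max_eq_right (sub_nonpos.2 h)]
      · exact mul_nonneg (le_max_right _ _) (hpos i j (Ne.symm hji))
  have h2 : 0 ≤ B (e - d) d := by
    have hed : e - d = ∑ i, ((a i : ℤ) - max ((a i : ℤ) - (b i : ℤ)) 0) • c i := by
      rw [he, hd, ← Finset.sum_sub_distrib]
      refine Finset.sum_congr rfl fun i _ => ?_
      rw [sub_zsmul]
      abel
    rw [hsymm, hed, map_sum]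
    refine Finset.sum_nonneg fun i _ => ?_
    rw [map_zsmul, zsmul_eq_mul]
    have hm : 0 ≤ (a i : ℤ) - max ((a i : ℤ) - (b i : ℤ)) 0 := by
      have h1 : (0:ℤ) ≤ a i := Int.natCast_nonneg _
      have h2 : (0:ℤ) ≤ b i := Int.natCast_nonneg _
      omega
    have := key i
    rw [hsymm] at this
    exact mul_nonneg hm this
  refine ⟨hd', h2, ?_⟩
  have h3 : B (e - d) d = B e d - B d d := by
    rw [map_sub, LinearMap.sub_apply]
  linarith
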